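/- Let r ≥ 1, let s_1,…,s_r be positive integers, set d_i := s_i+⋯+s_r, and let Q_1,…,Q_{r−1} ∈ F[t] be polynomials with deg Q_k ≤ μ_k and with every coefficient of Q_k of absolute value ≤ q^{s_k·q/(q−1)}. Let c_{i,j} ∈ F (1 ≤ i ≤ r, 1 ≤ j ≤ d_i) satisfy |c_{i,j}| < q^{j + d_i/(q−1)}. For n ≥ 1 and 1 ≤ ℓ ≤ r define g_n^{(ℓ)} := Σ_{ℓ≤i≤r} Σ_{1≤j≤d_i} (−1)^{i−ℓ}·c_{i,j}^{q^n}·(t−θ^{q^n})^{d_i−j}·Σ_{ℓ=k_0≤k_1≤⋯≤k_n=i} Π_{m=1}^{n} (Π_{k_{m−1}≤k<k_m} Q_k^{(m−1)})·((t−θ^{q^m})^{d_{k_m}})^{−1} ∈ F[[t]], where the inner sum ranges over all weakly increasing integer chains k_0 ≤ k_1 ≤ ⋯ ≤ k_n with k_0 = ℓ and k_n = i, (t−θ^{q^m})^{−1} denotes the inverse in F[[t]], and empty products equal 1. Then for each ℓ and n the Gauss norm of g_n^{(ℓ)} is finite and satisfies ‖g_n^{(ℓ)}‖_θ ≤ max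 over ℓ ≤ i ≤ r and 1 ≤ j ≤ d_i of q^{(μ_ℓ+⋯+μ_{i−1}) + d_ℓ·q/(q−1)}·(|c_{i,j}|·q^{−j−d_i/(q−1)})^{q^n}; consequently ‖g_n^{(ℓ)}‖_θ → 0 as n → ∞, and there exists g^{(ℓ)} ∈ F[[t]] with finite Gauss norm such that ‖g^{(ℓ)} − Σ_{n=1}^{N} g_n^{(ℓ)}‖_θ → 0 as N → ∞. (This is Proposition 3.?/4.2 of the paper: the series defining 𝐠 = Σ_{n≥1} 𝐰^{(n)}(Φ′^{−1})^{(n)}⋯(Φ′^{−1})^{(1)} converges in the Tate algebra 𝕋_θ.) -/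

import Mathlib

open PowerSeries Filter Topology
open scoped ENNReal Classical

noncomputable section

variable {F : Type*} [NormedField F]

/-- Gauss norm `‖f‖_θ = sup_m |c_m|·q^m ∈ [0,∞]` on `F[[t]]`. -/
def gaussNorm (q : ℕ) (f : PowerSeries F) : ℝ≥0∞ :=
  ⨆ m : ℕ, (‖PowerSeries.coeff m f‖₊ : ℝ≥0∞) * (q : ℝ≥0∞) ^ m

/-- `n`-fold Frobenius (`q^n`-th power) twist of a polynomial, applied coefficientwise. -/
def ptwist (q n : ℕ) (P : Polynomial F) : Polynomial F :=
  ∑ j ∈ Finset.range (P.natDegree + 1), Polynomial.C (P.coeff j ^ q ^ n) * Polynomial.X ^ j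

/-- The product over `m = 1,…,n` of
`(Π_{k_{m−1} ≤ k < k_m} Q_k^{(m−1)}) · ((t−θ^{q^m})^{d_{k_m}})⁻¹`,
attached to a weakly increasing chain `kc : Fin (n+1) → ℕ`; the inverse is taken in
`F[[t]]` and empty products equal `1`. -/
def chainProd (q : ℕ) (θ : F) (d : ℕ → ℕ) (Q : ℕ → Polynomial F) {n : ℕ}
    (kc : Fin (n + 1) → ℕ) : PowerSeries F :=
  ∏ m : Fin n,
    (∏ k ∈ Finset.Ico (kc m.castSucc) (kc m.succ), (ptwist q (m : ℕ) (Q k) : PowerSeries F)) *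
      ((PowerSeries.X - PowerSeries.C (θ ^ q ^ ((m : ℕ) + 1))) ^ d (kc m.succ))⁻¹

/-- The series `g_n^{(ℓ)}` from the proof of Proposition 4.2 of the paper. -/
def gSeries (q : ℕ) (θ : F) (d : ℕ → ℕ) (Q : ℕ → Polynomial F) (c : ℕ → ℕ → F)
    (r l n : ℕ) : PowerSeries F :=
  ∑ i ∈ Finset.Icc l r, ∑ j ∈ Finset.Icc 1 (d i),
    ((-1 : PowerSeries F) ^ (i - l) * PowerSeries.C (c i j ^ q ^ n) *
        (PowerSeries.X - PowerSeries.C (θ ^ q ^ n)) ^ (d i - j)) *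
      ∑ kc ∈ (Fintype.piFinset fun _ : Fin (n + 1) => Finset.Icc l i).filter
          (fun kc => Monotone kc ∧ kc 0 = l ∧ kc (Fin.last n) = i),
        chainProd q θ d Q kc

namespace Statement3Aux

lemma coeff_le_gaussNorm (q : ℕ) (f : PowerSeries F) (m : ℕ) :
    (‖PowerSeries.coeff m f‖₊ : ℝ≥0∞) * (q : ℝ≥0∞) ^ m ≤ gaussNorm q f :=
  le_iSup (fun m => (‖PowerSeries.coeff m f‖₊ : ℝ≥0∞) * (q : ℝ≥0∞) ^ m) m

lemma gaussNorm_le {q : ℕ} {f : PowerSeries F} {B : ℝ≥0∞}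
    (h : ∀ m, (‖PowerSeries.coeff m f‖₊ : ℝ≥0∞) * (q : ℝ≥0∞) ^ m ≤ B) : gaussNorm q f ≤ B :=
  iSup_le h

lemma sup_mul_le {ι : Type*} {s : Finset ι} {h : ι → ℝ≥0∞} {c B : ℝ≥0∞}
    (H : ∀ p ∈ s, h p * c ≤ B) : (s.sup h) * c ≤ B := by
  induction s using Finset.cons_induction with
  | empty => simp
  | cons a s ha ih =>
      rw [Finset.sup_cons]
      rcases le_total (h a) (s.sup h) with hh | hh
      · rw [sup_eq_right.2 hh]; exact ih fun p hp => H p (Finset.mem_cons.2 (Or.inr hp))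
      · rw [sup_eq_left.2 hh]; exact H a (Finset.mem_cons_self a s)

variable [IsUltrametricDist F]

lemma gaussNorm_sum_le {ι : Type*} (q : ℕ) (s : Finset ι) (f : ι → PowerSeries F) :
    gaussNorm q (∑ a ∈ s, f a) ≤ s.sup fun a => gaussNorm q (f a) := by
  refine gaussNorm_le fun m => ?_
  rw [map_sum]
  refine le_trans (mul_le_mul_left (ENNReal.coe_le_coe.2 (s.nnnorm_sum_le_sup_nnnorm _)) _) ?_
  rw [ENNReal.coe_finset_sup]
  exact sup_mul_le fun a ha => le_trans (coeff_le_gaussNorm q (f a) m) (Finset.le_sup (f := fun a => gaussNorm q (f a)) ha)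

lemma gaussNorm_add_le (q : ℕ) (f g : PowerSeries F) :
    gaussNorm q (f + g) ≤ gaussNorm q f ⊔ gaussNorm q g := by
  refine gaussNorm_le fun m => ?_
  rw [map_add]
  refine le_trans (mul_le_mul_left
    (ENNReal.coe_le_coe.2 (IsUltrametricDist.nnnorm_add_le_max _ _)) _) ?_
  rcases le_total ‖PowerSeries.coeff m f‖₊ ‖PowerSeries.coeff m g‖₊ with hh | hh
  · rw [max_eq_right hh]
    exact le_trans (coeff_le_gaussNorm q g m) le_sup_right
  · rw [max_eq_left hh]
    exact le_trans (coeff_le_gaussNorm q f m) le_sup_left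

lemma gaussNorm_mul_le (q : ℕ) (f g : PowerSeries F) :
    gaussNorm q (f * g) ≤ gaussNorm q f * gaussNorm q g := by
  refine gaussNorm_le fun m => ?_
  rw [PowerSeries.coeff_mul]
  refine le_trans (mul_le_mul_left
    (ENNReal.coe_le_coe.2 ((Finset.HasAntidiagonal.antidiagonal m).nnnorm_sum_le_sup_nnnorm _)) _) ?_
  rw [ENNReal.coe_finset_sup]
  refine sup_mul_le fun p hp => ?_
  rw [Finset.HasAntidiagonal.mem_antidiagonal] at hp
  rw [nnnorm_mul, ENNReal.coe_mul, ← hp, pow_add]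
  calc (‖PowerSeries.coeff p.1 f‖₊ : ℝ≥0∞) * (‖PowerSeries.coeff p.2 g‖₊ : ℝ≥0∞) *
        ((q:ℝ≥0∞) ^ p.1 * (q:ℝ≥0∞) ^ p.2)
      = ((‖PowerSeries.coeff p.1 f‖₊ : ℝ≥0∞) * (q:ℝ≥0∞) ^ p.1) *
        ((‖PowerSeries.coeff p.2 g‖₊ : ℝ≥0∞) * (q:ℝ≥0∞) ^ p.2) := by ring
    _ ≤ _ := mul_le_mul' (coeff_le_gaussNorm q f p.1) (coeff_le_gaussNorm q g p.2)

lemma gaussNorm_one_le (q : ℕ) : gaussNorm q (1 : PowerSeries F) ≤ 1 := by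
  refine gaussNorm_le fun m => ?_
  rcases eq_or_ne m 0 with rfl | hm
  · simp
  · simp [PowerSeries.coeff_one, hm]

lemma gaussNorm_prod_le {ι : Type*} (q : ℕ) (s : Finset ι) (f : ι → PowerSeries F) :
    gaussNorm q (∏ a ∈ s, f a) ≤ ∏ a ∈ s, gaussNorm q (f a) := by
  induction s using Finset.cons_induction with
  | empty => simpa using gaussNorm_one_le q
  | cons a s ha ih =>
      rw [Finset.prod_cons, Finset.prod_cons]
      exact le_trans (gaussNorm_mul_le q _ _) (mul_le_mul' le_rfl ih)

lemma gaussNorm_pow_le (q : ℕ) (f : PowerSeries F) (e : ℕ) :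
    gaussNorm q (f ^ e) ≤ gaussNorm q f ^ e := by
  induction e with
  | zero => simpa using gaussNorm_one_le q
  | succ e ih =>
      rw [pow_succ, pow_succ]
      exact le_trans (gaussNorm_mul_le q _ _) (mul_le_mul' ih le_rfl)

lemma gaussNorm_neg (q : ℕ) (f : PowerSeries F) : gaussNorm q (-f) = gaussNorm q f := by
  simp [_root_.gaussNorm]

lemma gaussNorm_C_le (q : ℕ) (a : F) : gaussNorm q (PowerSeries.C a) ≤ (‖a‖₊ : ℝ≥0∞) := by
  refine gaussNorm_le fun m => ?_
  rcases eq_or_ne m 0 with rfl | hm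
  · simp
  · simp [PowerSeries.coeff_C, hm]

lemma gaussNorm_X_sub_C_le (q : ℕ) {b : F} {B : ℝ≥0∞} (hb : (‖b‖₊ : ℝ≥0∞) ≤ B)
    (hqB : (q : ℝ≥0∞) ≤ B) : gaussNorm q (PowerSeries.X - PowerSeries.C b) ≤ B := by
  refine gaussNorm_le fun m => ?_
  match m with
  | 0 => simpa using hb
  | 1 => simpa [PowerSeries.coeff_X, PowerSeries.coeff_C] using hqB
  | (m+2) => simp [PowerSeries.coeff_X, PowerSeries.coeff_C]


lemma rpow_finset_sum {x : ℝ≥0∞} (hx0 : x ≠ 0) (hxt : x ≠ ⊤) {ι : Type*} (s : Finset ι)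
    (f : ι → ℝ) : x ^ (∑ a ∈ s, f a) = ∏ a ∈ s, x ^ f a := by
  induction s using Finset.cons_induction with
  | empty => simp
  | cons a s ha ih => rw [Finset.sum_cons, Finset.prod_cons, ENNReal.rpow_add _ _ hx0 hxt, ih]


lemma gaussNorm_inv_pow_le {q : ℕ} (hq2 : 2 ≤ q) {b : F} {K : ℕ}
    (hb : (‖b‖₊ : ℝ≥0∞) = (q:ℝ≥0∞) ^ K) (hK : 1 ≤ K) (e : ℕ) :
    _root_.gaussNorm q (((PowerSeries.X - PowerSeries.C b) ^ e)⁻¹)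
      ≤ ((q:ℝ≥0∞) ^ (K * e))⁻¹ := by
  have hq0 : (q:ℝ≥0∞) ≠ 0 := by
    simp only [ne_eq, Nat.cast_eq_zero]; omega
  have hqt : (q:ℝ≥0∞) ≠ ⊤ := ENNReal.natCast_ne_top q
  have hq1 : (1:ℝ≥0∞) ≤ (q:ℝ≥0∞) := by
    exact_mod_cast Nat.one_le_cast.2 (by omega)
  have hb0 : b ≠ 0 := by
    intro h
    rw [h] at hb
    simp only [nnnorm_zero, ENNReal.coe_zero] at hb
    exact absurd hb.symm (by positivity)
  set u : Fˣ := Units.mk0 b hb0 with hu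
  have hmul : (PowerSeries.X - PowerSeries.C b) * (-(PowerSeries.invUnitsSub u)) = 1 := by
    have h1 := PowerSeries.invUnitsSub_mul_sub u
    have h2 : (PowerSeries.X - PowerSeries.C b) * (-(PowerSeries.invUnitsSub u))
        = PowerSeries.invUnitsSub u * (PowerSeries.C (u : F) - PowerSeries.X) := by
      rw [hu]; simp only [Units.val_mk0]; ring
    rw [h2, h1]
  have hcc : PowerSeries.constantCoeff ((PowerSeries.X - PowerSeries.C b) ^ e) ≠ 0 := by
    rw [map_pow]
    apply pow_ne_zero
    rw [map_sub, PowerSeries.constantCoeff_X, PowerSeries.constantCoeff_C]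
    simpa using hb0
  have hinv : (-(PowerSeries.invUnitsSub u)) ^ e
      = (((PowerSeries.X - PowerSeries.C b) ^ e)⁻¹) := by
    rw [PowerSeries.eq_inv_iff_mul_eq_one hcc, ← mul_pow, mul_comm, hmul, one_pow]
  rw [← hinv]
  have hGnorm : gaussNorm q (-(PowerSeries.invUnitsSub u)) ≤ ((q:ℝ≥0∞) ^ K)⁻¹ := by
    rw [gaussNorm_neg]
    refine gaussNorm_le fun m => ?_
    have hcoeff : PowerSeries.coeff m (PowerSeries.invUnitsSub u) = (b ^ (m+1))⁻¹ := by
      rw [PowerSeries.coeff_invUnitsSub, one_divp, Units.val_inv_eq_inv_val,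
        Units.val_pow_eq_pow_val, hu, Units.val_mk0]
    rw [hcoeff, nnnorm_inv, nnnorm_pow, ENNReal.coe_inv (pow_ne_zero _ (nnnorm_ne_zero_iff.2 hb0)), ENNReal.coe_pow, hb]
    have h2 : (((q:ℝ≥0∞) ^ K) ^ m)⁻¹ * (q:ℝ≥0∞) ^ m ≤ 1 := by
      have hle : (q:ℝ≥0∞) ^ m ≤ ((q:ℝ≥0∞) ^ K) ^ m := by
        rw [← pow_mul]
        exact pow_le_pow_right' hq1 (Nat.le_mul_of_pos_left m (by omega))
      refine le_trans (mul_le_mul' le_rfl hle) ?_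
      rw [ENNReal.inv_mul_cancel (by positivity) (by exact ENNReal.pow_ne_top (ENNReal.pow_ne_top hqt))]
    calc (((q:ℝ≥0∞) ^ K) ^ (m+1))⁻¹ * (q:ℝ≥0∞) ^ m
        = ((q:ℝ≥0∞) ^ K)⁻¹ * ((((q:ℝ≥0∞) ^ K) ^ m)⁻¹ * (q:ℝ≥0∞) ^ m) := by
          rw [pow_succ', ENNReal.mul_inv (Or.inl (by positivity)) (Or.inl (ENNReal.pow_ne_top hqt))]
          ring
      _ ≤ ((q:ℝ≥0∞) ^ K)⁻¹ * 1 := mul_le_mul' le_rfl h2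
      _ = ((q:ℝ≥0∞) ^ K)⁻¹ := mul_one _
  refine le_trans (gaussNorm_pow_le q _ e) ?_
  refine le_trans (pow_le_pow_left' hGnorm e) ?_
  rw [← ENNReal.inv_pow, ← pow_mul]

lemma gaussNorm_ptwist_le {q : ℕ} (hq2 : 2 ≤ q)
    {P : Polynomial F} {D : ℕ} (hdeg : P.natDegree ≤ D) {x : ℝ}
    (hP : ∀ m, ‖P.coeff m‖ ≤ (q:ℝ) ^ x) (M : ℕ) :
    gaussNorm q ((ptwist q M P : Polynomial F) : PowerSeries F)
      ≤ (q:ℝ≥0∞) ^ ((D : ℝ) + x * (q:ℝ)^M) := by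
  have hq0 : (q:ℝ≥0∞) ≠ 0 := by simp only [ne_eq, Nat.cast_eq_zero]; omega
  have hqt : (q:ℝ≥0∞) ≠ ⊤ := ENNReal.natCast_ne_top q
  have hq1 : (1:ℝ≥0∞) ≤ (q:ℝ≥0∞) := by exact_mod_cast Nat.one_le_cast.2 (by omega)
  have hqR : (0:ℝ) < q := by positivity
  refine gaussNorm_le fun m => ?_
  have hco : (ptwist q M P).coeff m
      = if m ∈ Finset.range (P.natDegree + 1) then P.coeff m ^ q ^ M else 0 := by
    rw [ptwist, Polynomial.finset_sum_coeff]
    simp only [Polynomial.coeff_C_mul, Polynomial.coeff_X_pow, mul_ite, mul_one, mul_zero]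
    exact Finset.sum_ite_eq (Finset.range _) m _
  rw [Polynomial.coeff_coe, hco]
  by_cases hm : m ∈ Finset.range (P.natDegree + 1)
  · rw [if_pos hm]
    have hmD : m ≤ D := le_trans (Nat.lt_succ_iff.1 (Finset.mem_range.1 hm)) hdeg
    have h1 : (‖P.coeff m ^ q ^ M‖₊ : ℝ≥0∞) ≤ ((q:ℝ≥0∞) ^ x) ^ (q ^ M) := by
      rw [nnnorm_pow, ENNReal.coe_pow]
      refine pow_le_pow_left' ?_ _
      rw [← enorm_eq_nnnorm, ← ofReal_norm]
      refine le_trans (ENNReal.ofReal_le_ofReal (hP m)) ?_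
      rw [← ENNReal.ofReal_natCast q, ENNReal.ofReal_rpow_of_pos (by exact_mod_cast hqR)]
    have h2 : (q:ℝ≥0∞) ^ m ≤ (q:ℝ≥0∞) ^ ((D:ℝ)) := by
      rw [← ENNReal.rpow_natCast (q:ℝ≥0∞) m]
      exact ENNReal.rpow_le_rpow_of_exponent_le hq1 (by exact_mod_cast hmD)
    refine le_trans (mul_le_mul' h1 h2) ?_
    rw [← ENNReal.rpow_natCast ((q:ℝ≥0∞) ^ x) (q ^ M), ← ENNReal.rpow_mul,
      ← ENNReal.rpow_add _ _ hq0 hqt]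
    refine ENNReal.rpow_le_rpow_of_exponent_le hq1 ?_
    push_cast
    linarith
  · rw [if_neg hm]
    simp


lemma gaussNorm_chainProd_le
    {q : ℕ} (hq2 : 2 ≤ q) {θ : F} (hθ : ‖θ‖ = (q:ℝ))
    {r : ℕ} {s d : ℕ → ℕ} (hd : ∀ i, d i = ∑ k ∈ Finset.Icc i r, s k)
    {μ : ℕ → ℕ} {Q : ℕ → Polynomial F}
    (hQdeg : ∀ k, 1 ≤ k → k ≤ r - 1 → (Q k).natDegree ≤ μ k)
    (hQ : ∀ k, 1 ≤ k → k ≤ r - 1 → ∀ m,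
      ‖(Q k).coeff m‖ ≤ (q : ℝ) ^ ((s k : ℝ) * (q:ℝ) / ((q:ℝ) - 1)))
    {l i : ℕ} (hl : 1 ≤ l) (hir : i ≤ r)
    {n : ℕ} {kc : Fin (n+1) → ℕ} (hmono : Monotone kc) (h0 : kc 0 = l)
    (hlast : kc (Fin.last n) = i) :
    gaussNorm q (chainProd q θ d Q kc) ≤
      (q:ℝ≥0∞) ^ (((∑ k ∈ Finset.Ico l i, μ k : ℕ) : ℝ)
        + (d l : ℝ) * (q:ℝ) / ((q:ℝ)-1) - (q:ℝ)^(n+1) * (d i : ℝ) / ((q:ℝ)-1)) := by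
  have hq0 : (q:ℝ≥0∞) ≠ 0 := by simp only [ne_eq, Nat.cast_eq_zero]; omega
  have hqt : (q:ℝ≥0∞) ≠ ⊤ := ENNReal.natCast_ne_top q
  have hq1 : (1:ℝ≥0∞) ≤ (q:ℝ≥0∞) := by exact_mod_cast Nat.one_le_cast.2 (by omega)
  have hqR : (1:ℝ) < (q:ℝ) := by exact_mod_cast (by omega : 1 < q)
  have hq1R : ((q:ℝ) - 1) ≠ 0 := by linarith
  set K : ℕ → ℕ := fun a => kc ⟨min a n, Nat.lt_succ_of_le (Nat.min_le_right a n)⟩ with hKdef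
  have hKmono : Monotone K := by
    intro a b hab
    exact hmono (by simp only [Fin.mk_le_mk]; exact min_le_min hab le_rfl)
  have hK0 : K 0 = l := by
    rw [hKdef]
    simp only [Nat.zero_min]
    rw [← h0]
    rfl
  have hKn : K n = i := by
    rw [hKdef]
    simp only [Nat.min_self]
    rw [← hlast]
    rfl
  have hKub : ∀ a, K a ≤ i := fun a => hlast ▸ hmono (Fin.le_last _)
  have hKlb : ∀ a, l ≤ K a := fun a => h0 ▸ hmono (Fin.zero_le _)
  have hcs : ∀ m : Fin n, kc m.castSucc = K (m : ℕ) := by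
    intro m
    congr 1
    ext
    simp [Nat.min_eq_left (le_of_lt m.isLt)]
  have hsc : ∀ m : Fin n, kc m.succ = K ((m : ℕ) + 1) := by
    intro m
    congr 1
    ext
    simp [Nat.min_eq_left m.isLt]
  have hds : ∀ a b, a ≤ b → b ≤ r →
      (∑ k ∈ Finset.Ico a b, (s k : ℝ)) = (d a : ℝ) - (d b : ℝ) := by
    intro a b hab hbr
    have h1 : (∑ k ∈ Finset.Ico a b, s k) + d b = d a := by
      rw [hd a, hd b, ← Finset.Ico_add_one_right_eq_Icc, ← Finset.Ico_add_one_right_eq_Icc,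
        Finset.sum_Ico_consecutive _ hab (show b ≤ r + 1 from Nat.le_succ_of_le hbr)]
    have h2 := congrArg (fun t : ℕ => (t:ℝ)) h1
    push_cast at h2 ⊢
    linarith
  set em : ℕ → ℝ := fun m => (∑ k ∈ Finset.Ico (K m) (K (m+1)), (μ k : ℝ))
      + ((q:ℝ)^(m+1) * ((d (K m) : ℝ) - (d (K (m+1)) : ℝ)) / ((q:ℝ)-1))
      - (q:ℝ)^(m+1) * (d (K (m+1)) : ℝ) with hemdef
  have step1 : gaussNorm q (chainProd q θ d Q kc)
      ≤ ∏ m : Fin n, (q:ℝ≥0∞) ^ (em (m:ℕ)) := by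
    rw [chainProd]
    refine le_trans (gaussNorm_prod_le q _ _) (Finset.prod_le_prod' fun m _ => ?_)
    refine le_trans (gaussNorm_mul_le q _ _) ?_
    have hA : gaussNorm q (∏ k ∈ Finset.Ico (kc m.castSucc) (kc m.succ),
        ((ptwist q (m:ℕ) (Q k) : Polynomial F) : PowerSeries F))
        ≤ (q:ℝ≥0∞) ^ (∑ k ∈ Finset.Ico (K (m:ℕ)) (K ((m:ℕ)+1)),
            ((μ k : ℝ) + ((s k : ℝ) * (q:ℝ) / ((q:ℝ)-1)) * (q:ℝ)^(m:ℕ))) := by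
      rw [rpow_finset_sum hq0 hqt, hcs m, hsc m]
      refine le_trans (gaussNorm_prod_le q _ _) (Finset.prod_le_prod' fun k hk => ?_)
      have hk1 : 1 ≤ k := le_trans hl (le_trans (hKlb _) (Finset.mem_Ico.1 hk).1)
      have hk2 : k ≤ r - 1 := by
        have h3 := lt_of_lt_of_le (Finset.mem_Ico.1 hk).2 (le_trans (hKub _) hir)
        omega
      exact gaussNorm_ptwist_le hq2 (hQdeg k hk1 hk2) (hQ k hk1 hk2) (m:ℕ)
    have hB : _root_.gaussNorm q
        (((PowerSeries.X - PowerSeries.C (θ ^ q ^ ((m:ℕ)+1))) ^ d (kc m.succ))⁻¹)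
        ≤ (q:ℝ≥0∞) ^ (-((q:ℝ)^((m:ℕ)+1) * (d (K ((m:ℕ)+1)) : ℝ))) := by
      rw [hsc m]
      have hbnorm : (‖θ ^ q ^ ((m:ℕ)+1)‖₊ : ℝ≥0∞) = (q:ℝ≥0∞) ^ (q ^ ((m:ℕ)+1)) := by
        rw [nnnorm_pow, ENNReal.coe_pow]
        congr 1
        rw [← enorm_eq_nnnorm, ← ofReal_norm, hθ, ENNReal.ofReal_natCast]
      refine le_trans (gaussNorm_inv_pow_le hq2 hbnorm (Nat.one_le_pow _ _ (by omega)) _) ?_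
      rw [ENNReal.rpow_neg,
        ← ENNReal.rpow_natCast (q:ℝ≥0∞) (q ^ ((m:ℕ)+1) * d (K ((m:ℕ)+1)))]
      refine le_of_eq ?_
      congr 1
      push_cast
      ring
    refine le_trans (mul_le_mul' hA hB) ?_
    rw [← ENNReal.rpow_add _ _ hq0 hqt]
    refine ENNReal.rpow_le_rpow_of_exponent_le hq1 (le_of_eq ?_)
    have hsum := hds (K (m:ℕ)) (K ((m:ℕ)+1)) (hKmono (Nat.le_succ _))
      (le_trans (hKub _) hir)
    rw [hemdef]
    simp only
    rw [← hsum, Finset.sum_add_distrib, ← Finset.sum_mul, ← Finset.sum_div, ← Finset.sum_mul]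
    field_simp
    ring
  refine le_trans step1 (le_of_eq ?_)
  rw [← rpow_finset_sum hq0 hqt]
  congr 1
  rw [Fin.sum_univ_eq_sum_range em n]
  set A : ℕ → ℝ := fun a => ∑ k ∈ Finset.Ico l (K a), (μ k : ℝ) with hAdef
  set B : ℕ → ℝ := fun a => (q:ℝ)^(a+1) * (d (K a) : ℝ) / ((q:ℝ)-1) with hBdef
  have hterm : ∀ m, em m = (A (m+1) - A m) + (B m - B (m+1)) := by
    intro m
    have h1 : A m + (∑ k ∈ Finset.Ico (K m) (K (m+1)), (μ k:ℝ)) = A (m+1) := by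
      rw [hAdef]
      exact Finset.sum_Ico_consecutive _ (hKlb m) (hKmono (Nat.le_succ m))
    have h2 : (∑ k ∈ Finset.Ico (K m) (K (m+1)), (μ k:ℝ)) = A (m+1) - A m := by linarith
    rw [hemdef]
    simp only
    rw [h2, hBdef]
    simp only
    field_simp
    ring
  rw [Finset.sum_congr rfl (fun m _ => hterm m), Finset.sum_add_distrib,
    Finset.sum_range_sub A, Finset.sum_range_sub' B]
  have hA0 : A 0 = 0 := by rw [hAdef]; simp [hK0]
  have hAn : A n = ((∑ k ∈ Finset.Ico l i, μ k : ℕ) : ℝ) := by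
    rw [hAdef]
    simp only [hKn]
    rw [Nat.cast_sum]
  have hB0 : B 0 = (q:ℝ)^1 * (d l : ℝ) / ((q:ℝ)-1) := by rw [hBdef]; simp [hK0]
  have hBn : B n = (q:ℝ)^(n+1) * (d i : ℝ) / ((q:ℝ)-1) := by rw [hBdef]; simp [hKn]
  rw [hA0, hAn, hB0, hBn]
  ring

end Statement3Aux

open Statement3Aux

/-- Proposition 4.2 of the paper: convergence of the series defining
`𝐠 = Σ_{n≥1} 𝐰^{(n)}(Φ′⁻¹)^{(n)}⋯(Φ′⁻¹)^{(1)}` in the Tate algebra `𝕋_θ`.  For each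
`1 ≤ ℓ ≤ r` and `n ≥ 1`, the Gauss norm of `g_n^{(ℓ)}` is finite and bounded by
`max_{i,j} q^{(μ_ℓ+⋯+μ_{i−1}) + d_ℓ q/(q−1)}·(|c_{i,j}| q^{−j−d_i/(q−1)})^{q^n}`;
consequently `‖g_n^{(ℓ)}‖_θ → 0`, and the partial sums `Σ_{n=1}^N g_n^{(ℓ)}` converge in
Gauss norm to some `g^{(ℓ)}` of finite Gauss norm. -/
theorem statement3
    {F : Type*} [NormedField F] [IsUltrametricDist F] [CompleteSpace F]
    (q : ℕ) (hq : IsPrimePow q) (θ : F) (hθ : ‖θ‖ = (q : ℝ))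
    (r : ℕ) (hr : 1 ≤ r) (s : ℕ → ℕ) (hs : ∀ k, 1 ≤ k → k ≤ r → 0 < s k)
    (d : ℕ → ℕ) (hd : ∀ i, d i = ∑ k ∈ Finset.Icc i r, s k)
    (μ : ℕ → ℕ) (Q : ℕ → Polynomial F)
    (hQdeg : ∀ k, 1 ≤ k → k ≤ r - 1 → (Q k).natDegree ≤ μ k)
    (hQ : ∀ k, 1 ≤ k → k ≤ r - 1 → ∀ m,
      ‖(Q k).coeff m‖ ≤ (q : ℝ) ^ ((s k : ℝ) * (q : ℝ) / ((q : ℝ) - 1)))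
    (c : ℕ → ℕ → F)
    (hc : ∀ i j, 1 ≤ i → i ≤ r → 1 ≤ j → j ≤ d i →
      ‖c i j‖ < (q : ℝ) ^ ((j : ℝ) + (d i : ℝ) / ((q : ℝ) - 1))) :
    ∀ l, 1 ≤ l → l ≤ r →
      (∀ n, 1 ≤ n →
        gaussNorm q (gSeries q θ d Q c r l n) ≠ ⊤ ∧
        gaussNorm q (gSeries q θ d Q c r l n) ≤
          (Finset.Icc l r).sup (fun i => (Finset.Icc 1 (d i)).sup (fun j =>
            ENNReal.ofReal
              ((q : ℝ) ^ (((∑ k ∈ Finset.Ico l i, μ k : ℕ) : ℝ)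
                  + (d l : ℝ) * (q : ℝ) / ((q : ℝ) - 1)) *
                (‖c i j‖ * (q : ℝ) ^ (-(j : ℝ) - (d i : ℝ) / ((q : ℝ) - 1))) ^ q ^ n))))
      ∧ Tendsto (fun n => gaussNorm q (gSeries q θ d Q c r l n)) atTop (nhds 0)
      ∧ ∃ g : PowerSeries F, gaussNorm q g ≠ ⊤ ∧
          Tendsto (fun N => gaussNorm q (g - ∑ n ∈ Finset.Icc 1 N, gSeries q θ d Q c r l n))
            atTop (nhds 0) := by
  intro l hl1 hlr
  have hq2 : 2 ≤ q := hq.two_le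
  have hq0 : (q:ℝ≥0∞) ≠ 0 := by simp only [ne_eq, Nat.cast_eq_zero]; omega
  have hqt : (q:ℝ≥0∞) ≠ ⊤ := ENNReal.natCast_ne_top q
  have hq1 : (1:ℝ≥0∞) ≤ (q:ℝ≥0∞) := by exact_mod_cast Nat.one_le_cast.2 (by omega)
  have hqR : (1:ℝ) < (q:ℝ) := by exact_mod_cast (by omega : 1 < q)
  have hq0R : (0:ℝ) < (q:ℝ) := by positivity
  have hq1R : ((q:ℝ) - 1) ≠ 0 := by linarith
  set RHS : ℕ → ℝ≥0∞ := fun n =>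
    (Finset.Icc l r).sup (fun i => (Finset.Icc 1 (d i)).sup (fun j =>
      ENNReal.ofReal
        ((q : ℝ) ^ (((∑ k ∈ Finset.Ico l i, μ k : ℕ) : ℝ)
            + (d l : ℝ) * (q : ℝ) / ((q : ℝ) - 1)) *
          (‖c i j‖ * (q : ℝ) ^ (-(j : ℝ) - (d i : ℝ) / ((q : ℝ) - 1))) ^ q ^ n))) with hRHSdef
  -- main bound, for every n
  have main : ∀ n : ℕ, gaussNorm q (gSeries q θ d Q c r l n) ≤ RHS n := by
    intro n
    rw [gSeries, hRHSdef]
    refine le_trans (gaussNorm_sum_le q _ _) (Finset.sup_mono_fun fun i hi => ?_)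
    refine le_trans (gaussNorm_sum_le q _ _) (Finset.sup_mono_fun fun j hj => ?_)
    rw [Finset.mem_Icc] at hi hj
    -- bound for a single term
    have hbnorm : (‖θ ^ q ^ n‖₊ : ℝ≥0∞) = (q:ℝ≥0∞) ^ (q ^ n) := by
      rw [nnnorm_pow, ENNReal.coe_pow]
      congr 1
      rw [← enorm_eq_nnnorm, ← ofReal_norm, hθ, ENNReal.ofReal_natCast]
    have hqle : (q:ℝ≥0∞) ≤ (q:ℝ≥0∞) ^ (q ^ n) := by
      conv_lhs => rw [← pow_one (q:ℝ≥0∞)]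
      exact pow_le_pow_right' hq1 (Nat.one_le_pow _ _ (by omega))
    have hneg : gaussNorm q ((-1 : PowerSeries F) ^ (i - l)) ≤ 1 := by
      refine le_trans (gaussNorm_pow_le q _ _) (pow_le_one' ?_ _)
      have h5 : (-1 : PowerSeries F) = -(1 : PowerSeries F) := by ring
      rw [h5, gaussNorm_neg]
      exact gaussNorm_one_le q
    have hC : gaussNorm q (PowerSeries.C (c i j ^ q ^ n))
        ≤ ((‖c i j‖₊ : ℝ≥0∞)) ^ (q ^ n) := by
      refine le_trans (gaussNorm_C_le q _) ?_
      rw [nnnorm_pow, ENNReal.coe_pow]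
    have hpow : _root_.gaussNorm q ((PowerSeries.X - PowerSeries.C (θ ^ q ^ n)) ^ (d i - j))
        ≤ ((q:ℝ≥0∞) ^ (q ^ n)) ^ (d i - j) :=
      le_trans (gaussNorm_pow_le q _ _)
        (pow_le_pow_left' (gaussNorm_X_sub_C_le q (le_of_eq hbnorm) hqle) _)
    have hchains : gaussNorm q
        (∑ kc ∈ (Fintype.piFinset fun _ : Fin (n + 1) => Finset.Icc l i).filter
          (fun kc => Monotone kc ∧ kc 0 = l ∧ kc (Fin.last n) = i), chainProd q θ d Q kc)
        ≤ (q:ℝ≥0∞) ^ (((∑ k ∈ Finset.Ico l i, μ k : ℕ) : ℝ)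
            + (d l : ℝ) * (q:ℝ) / ((q:ℝ)-1) - (q:ℝ)^(n+1) * (d i : ℝ) / ((q:ℝ)-1)) := by
      refine le_trans (gaussNorm_sum_le q _ _) (Finset.sup_le fun kc hkc => ?_)
      obtain ⟨-, hmono, h0, hlast⟩ := Finset.mem_filter.1 hkc
      exact gaussNorm_chainProd_le hq2 hθ hd hQdeg hQ hl1 hi.2 hmono h0 hlast
    refine le_trans (gaussNorm_mul_le q _ _) ?_
    refine le_trans (mul_le_mul'
      (le_trans (gaussNorm_mul_le q _ _)
        (mul_le_mul' (le_trans (gaussNorm_mul_le q _ _)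
          (mul_le_mul' hneg hC)) hpow)) hchains) ?_
    -- now pure computation
    rw [one_mul]
    have hcast : (((d i - j : ℕ)) : ℝ) = (d i : ℝ) - (j : ℝ) := by
      rw [Nat.cast_sub hj.2]
    have hexp : ((q:ℝ≥0∞) ^ (q ^ n)) ^ (d i - j)
        = (q:ℝ≥0∞) ^ (((q ^ n * (d i - j) : ℕ)) : ℝ) := by
      rw [← pow_mul, ENNReal.rpow_natCast]
    rw [hexp, mul_assoc, ← ENNReal.rpow_add _ _ hq0 hqt]
    have hofreal : ENNReal.ofReal
        ((q : ℝ) ^ (((∑ k ∈ Finset.Ico l i, μ k : ℕ) : ℝ)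
            + (d l : ℝ) * (q : ℝ) / ((q : ℝ) - 1)) *
          (‖c i j‖ * (q : ℝ) ^ (-(j : ℝ) - (d i : ℝ) / ((q : ℝ) - 1))) ^ q ^ n)
        = ((‖c i j‖₊ : ℝ≥0∞)) ^ (q ^ n) *
          ((q:ℝ≥0∞) ^ ((((∑ k ∈ Finset.Ico l i, μ k : ℕ) : ℝ)
            + (d l : ℝ) * (q : ℝ) / ((q : ℝ) - 1)))
           * (q:ℝ≥0∞) ^ ((-(j : ℝ) - (d i : ℝ) / ((q : ℝ) - 1)) * ((q ^ n : ℕ) : ℝ))) := by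
      have hQe : ∀ x : ℝ, ENNReal.ofReal ((q:ℝ) ^ x) = (q:ℝ≥0∞) ^ x := by
        intro x
        rw [← ENNReal.ofReal_rpow_of_pos hq0R, ENNReal.ofReal_natCast]
      rw [ENNReal.ofReal_mul (by positivity), ENNReal.ofReal_pow (by positivity),
        ENNReal.ofReal_mul (norm_nonneg _), ofReal_norm, enorm_eq_nnnorm,
        hQe, hQe, mul_pow,
        ← ENNReal.rpow_natCast ((q:ℝ≥0∞) ^ (-(j : ℝ) - (d i : ℝ) / ((q : ℝ) - 1))) (q^n),
        ← ENNReal.rpow_mul]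
      ring
    rw [hofreal, ← ENNReal.rpow_add _ _ hq0 hqt]
    refine mul_le_mul' le_rfl (le_of_eq ?_)
    congr 1
    push_cast [hcast]
    field_simp
    ring
  -- finiteness of the bound
  have hRHSfin : ∀ n, RHS n ≠ ⊤ := by
    intro n
    rw [hRHSdef]
    refine ne_of_lt ((Finset.sup_lt_iff (by simp : (⊥:ℝ≥0∞) < ⊤)).2
      fun i hi => (Finset.sup_lt_iff (by simp : (⊥:ℝ≥0∞) < ⊤)).2
      fun j hj => ENNReal.ofReal_lt_top)
  have hRHS_le_S : ∀ n, RHS n ≤ ∑ i ∈ Finset.Icc l r, ∑ j ∈ Finset.Icc 1 (d i),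
      ENNReal.ofReal ((q : ℝ) ^ (((∑ k ∈ Finset.Ico l i, μ k : ℕ) : ℝ)
          + (d l : ℝ) * (q : ℝ) / ((q : ℝ) - 1)) *
        (‖c i j‖ * (q : ℝ) ^ (-(j : ℝ) - (d i : ℝ) / ((q : ℝ) - 1))) ^ q ^ n) := by
    intro n
    rw [hRHSdef]
    refine Finset.sup_le fun i hi => ?_
    have hstep : (Finset.Icc 1 (d i)).sup (fun j =>
        ENNReal.ofReal ((q : ℝ) ^ (((∑ k ∈ Finset.Ico l i, μ k : ℕ) : ℝ)
          + (d l : ℝ) * (q : ℝ) / ((q : ℝ) - 1)) *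
        (‖c i j‖ * (q : ℝ) ^ (-(j : ℝ) - (d i : ℝ) / ((q : ℝ) - 1))) ^ q ^ n))
        ≤ ∑ j ∈ Finset.Icc 1 (d i),
        ENNReal.ofReal ((q : ℝ) ^ (((∑ k ∈ Finset.Ico l i, μ k : ℕ) : ℝ)
          + (d l : ℝ) * (q : ℝ) / ((q : ℝ) - 1)) *
        (‖c i j‖ * (q : ℝ) ^ (-(j : ℝ) - (d i : ℝ) / ((q : ℝ) - 1))) ^ q ^ n) :=
      Finset.sup_le fun j hj => Finset.single_le_sum (f := fun j =>
        ENNReal.ofReal ((q : ℝ) ^ (((∑ k ∈ Finset.Ico l i, μ k : ℕ) : ℝ)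
          + (d l : ℝ) * (q : ℝ) / ((q : ℝ) - 1)) *
        (‖c i j‖ * (q : ℝ) ^ (-(j : ℝ) - (d i : ℝ) / ((q : ℝ) - 1))) ^ q ^ n))
        (fun _ _ => zero_le) hj
    refine le_trans hstep (Finset.single_le_sum (f := fun i => ∑ j ∈ Finset.Icc 1 (d i),
        ENNReal.ofReal ((q : ℝ) ^ (((∑ k ∈ Finset.Ico l i, μ k : ℕ) : ℝ)
          + (d l : ℝ) * (q : ℝ) / ((q : ℝ) - 1)) *
        (‖c i j‖ * (q : ℝ) ^ (-(j : ℝ) - (d i : ℝ) / ((q : ℝ) - 1))) ^ q ^ n))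
        (fun _ _ => zero_le) hi)
  have hStend : Tendsto (fun n => ∑ i ∈ Finset.Icc l r, ∑ j ∈ Finset.Icc 1 (d i),
      ENNReal.ofReal ((q : ℝ) ^ (((∑ k ∈ Finset.Ico l i, μ k : ℕ) : ℝ)
          + (d l : ℝ) * (q : ℝ) / ((q : ℝ) - 1)) *
        (‖c i j‖ * (q : ℝ) ^ (-(j : ℝ) - (d i : ℝ) / ((q : ℝ) - 1))) ^ q ^ n))
      atTop (nhds 0) := by
    have h0 : (0:ℝ≥0∞) = ∑ i ∈ Finset.Icc l r, ∑ j ∈ Finset.Icc 1 (d i), (0:ℝ≥0∞) := by simp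
    rw [h0]
    refine tendsto_finset_sum _ fun i hi => tendsto_finset_sum _ fun j hj => ?_
    rw [Finset.mem_Icc] at hi hj
    have hx0 : 0 ≤ ‖c i j‖ * (q:ℝ) ^ (-(j:ℝ) - (d i:ℝ)/((q:ℝ)-1)) := by positivity
    have hx1 : ‖c i j‖ * (q:ℝ) ^ (-(j:ℝ) - (d i:ℝ)/((q:ℝ)-1)) < 1 := by
      have hcij := hc i j (le_trans hl1 hi.1) hi.2 hj.1 hj.2
      have hy : (0:ℝ) < (q:ℝ) ^ ((j:ℝ) + (d i:ℝ)/((q:ℝ)-1)) := Real.rpow_pos_of_pos hq0R _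
      have hneg : -(j:ℝ) - (d i:ℝ)/((q:ℝ)-1) = -((j:ℝ) + (d i:ℝ)/((q:ℝ)-1)) := by ring
      rw [hneg, Real.rpow_neg (le_of_lt hq0R)]
      calc ‖c i j‖ * ((q:ℝ) ^ ((j:ℝ) + (d i:ℝ)/((q:ℝ)-1)))⁻¹
          < (q:ℝ) ^ ((j:ℝ) + (d i:ℝ)/((q:ℝ)-1)) * ((q:ℝ) ^ ((j:ℝ) + (d i:ℝ)/((q:ℝ)-1)))⁻¹ :=
            mul_lt_mul_of_pos_right hcij (inv_pos.2 hy)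
        _ = 1 := mul_inv_cancel₀ (ne_of_gt hy)
    have h2 : Tendsto (fun n : ℕ =>
        (‖c i j‖ * (q:ℝ) ^ (-(j:ℝ) - (d i:ℝ)/((q:ℝ)-1))) ^ (q ^ n)) atTop (nhds 0) :=
      (tendsto_pow_atTop_nhds_zero_of_lt_one hx0 hx1).comp
        (tendsto_pow_atTop_atTop_of_one_lt (by omega))
    have h3 := h2.const_mul ((q:ℝ) ^ (((∑ k ∈ Finset.Ico l i, μ k : ℕ):ℝ)
      + (d l:ℝ)*(q:ℝ)/((q:ℝ)-1)))
    rw [mul_zero] at h3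
    have h4 := ENNReal.tendsto_ofReal h3
    simpa using h4
  have htend : Tendsto (fun n => gaussNorm q (gSeries q θ d Q c r l n)) atTop (nhds 0) :=
    tendsto_of_tendsto_of_tendsto_of_le_of_le tendsto_const_nhds hStend
      (fun n => zero_le) (fun n => le_trans (main n) (hRHS_le_S n))
  have heps : ∀ ε : ℝ≥0∞, 0 < ε → ∃ N, ∀ n, N ≤ n →
      gaussNorm q (gSeries q θ d Q c r l n) ≤ ε := by
    intro ε hε
    obtain ⟨N, hN⟩ := (ENNReal.tendsto_atTop_zero).1 htend ε hε
    exact ⟨N, fun n hn => hN n hn⟩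
  have hcsum : ∀ m : ℕ,
      Summable (fun n : ℕ => PowerSeries.coeff m (gSeries q θ d Q c r l (n+1))) := by
    intro m
    apply NonarchimedeanAddGroup.summable_of_tendsto_cofinite_zero
    rw [Nat.cofinite_eq_atTop]
    have hb : ∀ n : ℕ, (‖PowerSeries.coeff m (gSeries q θ d Q c r l (n+1))‖₊ : ℝ≥0∞)
        ≤ gaussNorm q (gSeries q θ d Q c r l (n+1)) := by
      intro n
      refine le_trans ?_ (coeff_le_gaussNorm q _ m)
      exact le_mul_of_one_le_right' (one_le_pow_of_one_le' hq1 m)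
    have h5 : Tendsto (fun n : ℕ =>
        (‖PowerSeries.coeff m (gSeries q θ d Q c r l (n+1))‖₊ : ℝ≥0∞)) atTop (nhds 0) :=
      tendsto_of_tendsto_of_tendsto_of_le_of_le tendsto_const_nhds
        (htend.comp (tendsto_add_atTop_nat 1)) (fun n => zero_le) hb
    have h6 : Tendsto (fun n : ℕ =>
        ‖PowerSeries.coeff m (gSeries q θ d Q c r l (n+1))‖₊) atTop (nhds 0) := by
      refine ENNReal.tendsto_coe.1 ?_
      rw [ENNReal.coe_zero]
      exact h5
    refine tendsto_zero_iff_norm_tendsto_zero.2 ?_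
    have h7 := NNReal.tendsto_coe.2 h6
    simpa [coe_nnnorm] using h7
  set g : PowerSeries F := PowerSeries.mk
    (fun m => ∑' n : ℕ, PowerSeries.coeff m (gSeries q θ d Q c r l (n+1))) with hgdef
  have hpart : ∀ N m, PowerSeries.coeff m (∑ n ∈ Finset.Icc 1 N, gSeries q θ d Q c r l n)
      = ∑ i ∈ Finset.range N, PowerSeries.coeff m (gSeries q θ d Q c r l (i+1)) := by
    intro N m
    rw [map_sum, ← Finset.Ico_add_one_right_eq_Icc, Finset.sum_Ico_eq_sum_range]
    refine Finset.sum_congr (by norm_num) fun i _ => by rw [add_comm]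
  have hdiff : ∀ N m,
      PowerSeries.coeff m (g - ∑ n ∈ Finset.Icc 1 N, gSeries q θ d Q c r l n)
      = ∑' i : ℕ, PowerSeries.coeff m (gSeries q θ d Q c r l (i + N + 1)) := by
    intro N m
    have h12 := Summable.sum_add_tsum_nat_add N (hcsum m)
    rw [map_sub, hgdef, PowerSeries.coeff_mk, hpart, ← h12, add_sub_cancel_left]
  have hgbound : ∀ N, gaussNorm q (g - ∑ n ∈ Finset.Icc 1 N, gSeries q θ d Q c r l n)
      ≤ ⨆ k : ℕ, gaussNorm q (gSeries q θ d Q c r l (k + N + 1)) := by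
    intro N
    set T := ⨆ k : ℕ, gaussNorm q (gSeries q θ d Q c r l (k + N + 1)) with hT
    rcases eq_top_or_lt_top T with hTt | hTlt
    · exact le_of_le_of_eq le_top hTt.symm
    · refine gaussNorm_le fun m => ?_
      rw [hdiff N m]
      have hterm : ∀ i : ℕ,
          (‖PowerSeries.coeff m (gSeries q θ d Q c r l (i+N+1))‖₊ : ℝ≥0∞)
          ≤ T / (q:ℝ≥0∞)^m := by
        intro i
        rw [ENNReal.le_div_iff_mul_le (Or.inl (pow_ne_zero _ hq0))
          (Or.inl (ENNReal.pow_ne_top hqt))]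
        refine le_trans (coeff_le_gaussNorm q _ m) ?_
        rw [hT]
        exact le_iSup (fun k => gaussNorm q (gSeries q θ d Q c r l (k + N + 1))) i
      have hdivne : T / (q:ℝ≥0∞)^m ≠ ⊤ :=
        (ENNReal.div_lt_top (ne_of_lt hTlt) (pow_ne_zero _ hq0)).ne
      have h8 : (‖∑' i : ℕ, PowerSeries.coeff m (gSeries q θ d Q c r l (i+N+1))‖₊ : ℝ≥0∞)
          ≤ T / (q:ℝ≥0∞)^m := by
        have h9 : ∀ i, ‖PowerSeries.coeff m (gSeries q θ d Q c r l (i+N+1))‖₊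
            ≤ (T / (q:ℝ≥0∞)^m).toNNReal := by
          intro i
          rw [← ENNReal.coe_le_coe, ENNReal.coe_toNNReal hdivne]
          exact hterm i
        refine le_trans (ENNReal.coe_le_coe.2
          (IsUltrametricDist.nnnorm_tsum_le_of_forall_le h9)) ?_
        rw [ENNReal.coe_toNNReal hdivne]
      refine le_trans (mul_le_mul_left h8 _) ?_
      rw [ENNReal.div_mul_cancel (pow_ne_zero _ hq0) (ENNReal.pow_ne_top hqt)]
  have hTtend : Tendsto (fun N => ⨆ k : ℕ, gaussNorm q (gSeries q θ d Q c r l (k + N + 1)))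
      atTop (nhds 0) := by
    rw [ENNReal.tendsto_atTop_zero]
    intro ε hε
    obtain ⟨N0, hN0⟩ := heps ε hε
    exact ⟨N0, fun N hN => iSup_le fun k => hN0 _ (by omega)⟩
  have hfinal : Tendsto (fun N =>
      gaussNorm q (g - ∑ n ∈ Finset.Icc 1 N, gSeries q θ d Q c r l n)) atTop (nhds 0) :=
    tendsto_of_tendsto_of_tendsto_of_le_of_le tendsto_const_nhds hTtend
      (fun N => zero_le) hgbound
  have hgfin : gaussNorm q g ≠ ⊤ := by
    obtain ⟨N0, hN0⟩ := heps 1 one_pos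
    have h10 : gaussNorm q (g - ∑ n ∈ Finset.Icc 1 N0, gSeries q θ d Q c r l n) ≤ 1 :=
      le_trans (hgbound N0) (iSup_le fun k => hN0 _ (by omega))
    have h11 : gaussNorm q (∑ n ∈ Finset.Icc 1 N0, gSeries q θ d Q c r l n) < ⊤ := by
      refine lt_of_le_of_lt (gaussNorm_sum_le q _ _) ?_
      refine (Finset.sup_lt_iff (by simp : (⊥:ℝ≥0∞) < ⊤)).2 fun nn hnn => ?_
      exact lt_of_le_of_lt (main nn) (lt_top_iff_ne_top.2 (hRHSfin nn))
    have hsplit : g = (g - ∑ n ∈ Finset.Icc 1 N0, gSeries q θ d Q c r l n)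
        + ∑ n ∈ Finset.Icc 1 N0, gSeries q θ d Q c r l n := by ring
    refine ne_of_lt (lt_of_le_of_lt (le_trans (le_of_eq (congrArg _ hsplit))
      (gaussNorm_add_le q _ _)) ?_)
    exact sup_lt_iff.2 ⟨lt_of_le_of_lt h10 ENNReal.one_lt_top, h11⟩
  exact ⟨fun n hn => ⟨ne_of_lt (lt_of_le_of_lt (main n) (lt_top_iff_ne_top.2 (hRHSfin n))),
    main n⟩, htend, g, hgfin, hfinal⟩
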